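/- Let α ∈ [0,1] and set g = √((1−α)² + 4α²) and λ = 1/2 + α/g. In ℂ², let |0⟩, |1⟩ be the standard basis, |+⟩ = (|0⟩+|1⟩)/√2, |−⟩ = (|0⟩−|1⟩)/√2, and define the unit vectors ψ₀₀ = (|0⟩+|+⟩)/√(2+√2), ψ₀₁ = (|0⟩+|−⟩)/√(2+√2), ψ₁₀ = (|1⟩+|+⟩)/√(2+√2), ψ₁₁ = (|1⟩−|−⟩)/√(2+√2), and states ρ_x = |ψ_x⟩⟨ψ_x|. Define Kraus operators K⁰₀ = √λ|0⟩⟨0| + √(1−λ)|1⟩⟨1|, K⁰₁ = √(1−λ)|0⟩⟨0| + √λ|1⟩⟨1|, K¹₀ = √λ|+⟩⟨+| + √(1−λ)|−⟩⟨−|, K¹₁ = √(1−λ)|+⟩⟨+| + √λ|−⟩⟨−|, and Charlie's measurement effects C⁰₀ = |0⟩⟨0|, C⁰₁ = |1⟩⟨1|, C¹₀ = |+⟩⟨+|, C¹₁ = |−⟩⟨−|. Then (α/8)·Σ_{x,y} tr(K^y_{x_y} ρ_x (K^y_{x_y})†) + ((1−α)/16)·Σ_{x,y,z,b} tr(K^y_b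 ρ_x (K^y_b)† C^z_{x_z}) = 1/2 + (1−α)/(4√2) + √((1−α)² + 4α²)/(4√2). (This is the achievability part of Proposition 2: the explicit unsharp-measurement strategy attains the value P̄_succ^POVM(α).) -/

import Mathlib

open Matrix

noncomputable section

abbrev Mat2 := Matrix (Fin 2) (Fin 2) ℂ

/-- The `y`-th bit of the pair `(x₀, x₁)`. -/
def sel (x₀ x₁ y : Fin 2) : Fin 2 := if y = 0 then x₀ else x₁

/-- The rank-one projection (outer product) `|v⟩⟨v|`. -/
def proj (v : Fin 2 → ℂ) : Mat2 := vecMulVec v (star v)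

def ket0 : Fin 2 → ℂ := ![1, 0]
def ket1 : Fin 2 → ℂ := ![0, 1]
def ketP : Fin 2 → ℂ := ![1 / (Real.sqrt 2 : ℂ), 1 / (Real.sqrt 2 : ℂ)]
def ketM : Fin 2 → ℂ := ![1 / (Real.sqrt 2 : ℂ), -(1 / (Real.sqrt 2 : ℂ))]

/-- The orthonormal basis used by Bob's instrument `y` and Charlie's measurement `z`:
the computational basis for `y = 0` and the `±` basis for `y = 1`. -/
def bas (y j : Fin 2) : Fin 2 → ℂ :=
  if y = 0 then (if j = 0 then ket0 else ket1) else (if j = 0 then ketP else ketM)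

/-- Alice's states: `ψ₀₀ = (|0⟩+|+⟩)/√(2+√2)`, `ψ₀₁ = (|0⟩+|−⟩)/√(2+√2)`,
`ψ₁₀ = (|1⟩+|+⟩)/√(2+√2)`, `ψ₁₁ = (|1⟩−|−⟩)/√(2+√2)`. -/
def psi (x₀ x₁ : Fin 2) : Fin 2 → ℂ := fun i =>
  ((if x₀ = 0 then ket0 i else ket1 i) +
      (if x₀ = 1 ∧ x₁ = 1 then -1 else 1) * (if x₁ = 0 then ketP i else ketM i)) /
    (Real.sqrt (2 + Real.sqrt 2) : ℂ)

/-- The optimal sharpness `λ(α) = 1/2 + α/√((1−α)² + 4α²)`. -/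
def lam (α : ℝ) : ℝ := 1 / 2 + α / Real.sqrt ((1 - α) ^ 2 + 4 * α ^ 2)

/-- Bob's Kraus operators: `K^y_0 = √λ |bas y 0⟩⟨bas y 0| + √(1−λ) |bas y 1⟩⟨bas y 1|`
and `K^y_1` with `λ` and `1−λ` interchanged. -/
def K (α : ℝ) (y b : Fin 2) : Mat2 :=
  (Real.sqrt (if b = 0 then lam α else 1 - lam α) : ℂ) • proj (bas y 0) +
    (Real.sqrt (if b = 0 then 1 - lam α else lam α) : ℂ) • proj (bas y 1)

/-- Charlie's measurement effects: `C⁰₀ = |0⟩⟨0|`, `C⁰₁ = |1⟩⟨1|`, `C¹₀ = |+⟩⟨+|`,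
`C¹₁ = |−⟩⟨−|`. -/
def Cm (z c : Fin 2) : Mat2 := proj (bas z c)

lemma vmv_mul (a b c d : Fin 2 → ℂ) :
    vecMulVec a b * vecMulVec c d = (b ⬝ᵥ c) • vecMulVec a d := by
  ext i j
  simp [vecMulVec_apply, mul_apply, dotProduct, Fin.sum_univ_two, smul_eq_mul]
  ring

lemma vmv_trace (a b : Fin 2 → ℂ) : (vecMulVec a b).trace = a ⬝ᵥ b := by
  simp [Matrix.trace, dotProduct, vecMulVec_apply, Matrix.diag]

lemma proj_conjT (v : Fin 2 → ℂ) : (proj v)ᴴ = proj v := by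
  ext i j
  simp [proj, conjTranspose_apply, vecMulVec_apply, mul_comm]


set_option maxHeartbeats 4000000 in
/-- Achievability part of Proposition 2: the explicit unsharp-measurement strategy
attains the value `P̄_succ^POVM(α) = 1/2 + (1−α)/(4√2) + √((1−α)²+4α²)/(4√2)`. -/
theorem povm_strategy_achieves_optimum (α : ℝ) (hα : α ∈ Set.Icc (0 : ℝ) 1) :
    α / 8 * ∑ x₀ : Fin 2, ∑ x₁ : Fin 2, ∑ y : Fin 2,
        ((K α y (sel x₀ x₁ y) * proj (psi x₀ x₁) * (K α y (sel x₀ x₁ y))ᴴ).trace).re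
    + (1 - α) / 16 * ∑ x₀ : Fin 2, ∑ x₁ : Fin 2, ∑ y : Fin 2, ∑ z : Fin 2, ∑ b : Fin 2,
        ((K α y b * proj (psi x₀ x₁) * (K α y b)ᴴ * Cm z (sel x₀ x₁ z)).trace).re
    = 1 / 2 + (1 - α) / (4 * Real.sqrt 2)
        + Real.sqrt ((1 - α) ^ 2 + 4 * α ^ 2) / (4 * Real.sqrt 2) := by
  have hα0 := hα.1
  have hα1 := hα.2
  have hq : (0:ℝ) < (1-α)^2 + 4*α^2 := by nlinarith
  have hg0 : 0 < Real.sqrt ((1-α)^2+4*α^2) := Real.sqrt_pos.mpr hq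
  have h6 : Real.sqrt ((1-α)^2+4*α^2) ^ 2 = (1-α)^2+4*α^2 := Real.sq_sqrt hq.le
  have h9 : Real.sqrt ((1-α)^2+4*α^2) * (Real.sqrt ((1-α)^2+4*α^2))⁻¹ = 1 :=
    mul_inv_cancel₀ hg0.ne'
  have h1 : Real.sqrt 2 ^ 2 = 2 := Real.sq_sqrt (by norm_num)
  have h7 : Real.sqrt 2 * (Real.sqrt 2)⁻¹ = 1 :=
    mul_inv_cancel₀ (Real.sqrt_pos.mpr (by norm_num)).ne'
  have h2 : Real.sqrt (2+Real.sqrt 2) ^ 2 = 2 + Real.sqrt 2 :=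
    Real.sq_sqrt (by positivity)
  have h8 : Real.sqrt (2+Real.sqrt 2) * (Real.sqrt (2+Real.sqrt 2))⁻¹ = 1 :=
    mul_inv_cancel₀ (Real.sqrt_pos.mpr (by positivity)).ne'
  have hag : α / Real.sqrt ((1-α)^2+4*α^2) ≤ 1/2 := by
    rw [div_le_iff₀ hg0]
    nlinarith [h6, hg0, hα0, sq_nonneg (1-α), sq_nonneg (Real.sqrt ((1-α)^2+4*α^2) - 2*α)]
  have hlam0 : 0 ≤ lam α := by
    have := div_nonneg hα0 hg0.le
    unfold lam; linarith
  have hlam1 : lam α ≤ 1 := by unfold lam; linarith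
  have h3 : Real.sqrt (lam α) ^ 2 = 1/2 + α * (Real.sqrt ((1-α)^2+4*α^2))⁻¹ := by
    rw [Real.sq_sqrt hlam0]; unfold lam; ring
  have h4 : Real.sqrt (1 - lam α) ^ 2 = 1/2 - α * (Real.sqrt ((1-α)^2+4*α^2))⁻¹ := by
    rw [Real.sq_sqrt (by linarith)]; unfold lam; ring
  have h5 : Real.sqrt (lam α) * Real.sqrt (1 - lam α)
      = (1-α)/2 * (Real.sqrt ((1-α)^2+4*α^2))⁻¹ := by
    rw [← Real.sqrt_mul hlam0]
    have e : lam α * (1 - lam α)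
        = ((1-α)/2 * (Real.sqrt ((1-α)^2+4*α^2))⁻¹)^2 := by
      unfold lam
      field_simp
      have hq' : (0:ℝ) < (1-α)^2 + α^2*4 := by nlinarith
      have h6' := Real.sq_sqrt hq'.le
      have hg' := Real.sqrt_pos.mpr hq'
      field_simp
      linear_combination h6'
    rw [e, Real.sqrt_sq (mul_nonneg (by linarith) (by positivity))]
  simp only [Fin.sum_univ_two]
  simp only [K, Cm, sel, conjTranspose_add, conjTranspose_smul, proj_conjT,
    Complex.star_def, Complex.conj_ofReal]
  simp only [proj, add_mul, mul_add, smul_mul_assoc, mul_smul_comm, vmv_mul,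
    trace_add, trace_smul, vmv_trace, smul_smul, smul_eq_mul]
  norm_num [dotProduct, Fin.sum_univ_two, bas, psi, ket0, ket1, ketP, ketM,
    Pi.star_apply, Complex.star_def, map_div₀, Complex.conj_ofReal]
  linear_combination
    ((1/4 : ℝ)*((Real.sqrt (2+Real.sqrt 2))⁻¹)^2 + (1/8 : ℝ)*((Real.sqrt (2+Real.sqrt 2))⁻¹)^2*(Real.sqrt (1 - lam α))^2 + (1/8 : ℝ)*((Real.sqrt (2+Real.sqrt 2))⁻¹)^2*(Real.sqrt (lam α))^2 + (1/8 : ℝ)*((Real.sqrt 2)⁻¹) + (1/8 : ℝ)*((Real.sqrt 2)⁻¹)*(Real.sqrt ((1-α)^2+4*α^2)) + (3/16 : ℝ)*(Real.sqrt 2)*((Real.sqrt (2+Real.sqrt 2))⁻¹)^2 + (1/16 : ℝ)*(Real.sqrt 2)*((Real.sqrt (2+Real.sqrt 2))⁻¹)^2*((Real.sqrt ((1-α)^2+4*α^2))⁻¹) + (1/16 : ℝ)*(Real.sqrt 2)*((Real.sqrt (2+Real.sqrt 2))⁻¹)^2*(Real.sqrt (1 - lam α))^2 + (1/8 : ℝ)*(Real.sqrt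 2)*((Real.sqrt (2+Real.sqrt 2))⁻¹)^2*(Real.sqrt (lam α))*(Real.sqrt (1 - lam α)) + (1/16 : ℝ)*(Real.sqrt 2)*((Real.sqrt (2+Real.sqrt 2))⁻¹)^2*(Real.sqrt (lam α))^2 + (1/32 : ℝ)*(Real.sqrt 2)^2 + ((-1)/32 : ℝ)*(Real.sqrt 2)^2*((Real.sqrt ((1-α)^2+4*α^2))⁻¹) + (1/16 : ℝ)*(Real.sqrt 2)^2*((Real.sqrt (2+Real.sqrt 2))⁻¹)^2 + (1/16 : ℝ)*(Real.sqrt 2)^2*((Real.sqrt (2+Real.sqrt 2))⁻¹)^2*((Real.sqrt ((1-α)^2+4*α^2))⁻¹) + (1/16 : ℝ)*(Real.sqrt 2)^2*((Real.sqrt (2+Real.sqrt 2))⁻¹)^2*(Real.sqrt (1 - lam α))^2 + (1/8 : ℝ)*(Real.sqrt 2)^2*((Real.sqrt (2+Real.sqrt 2))⁻¹)^2*(Real.sqrt (lam α))*(Real.sqrt (1 - lam α)) + (1/16 : ℝ)*(Real.sqrt 2)^2*((Real.sqrt (2+Real.sqrt 2))⁻¹)^2*(Real.sqrt (lam α))^2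 + (1/32 : ℝ)*(Real.sqrt 2)^3*((Real.sqrt (2+Real.sqrt 2))⁻¹)^2 + (1/32 : ℝ)*(Real.sqrt 2)^3*((Real.sqrt (2+Real.sqrt 2))⁻¹)^2*((Real.sqrt ((1-α)^2+4*α^2))⁻¹) + (1/32 : ℝ)*(Real.sqrt 2)^3*((Real.sqrt (2+Real.sqrt 2))⁻¹)^2*(Real.sqrt (1 - lam α))^2 + (1/16 : ℝ)*(Real.sqrt 2)^3*((Real.sqrt (2+Real.sqrt 2))⁻¹)^2*(Real.sqrt (lam α))*(Real.sqrt (1 - lam α)) + (1/32 : ℝ)*(Real.sqrt 2)^3*((Real.sqrt (2+Real.sqrt 2))⁻¹)^2*(Real.sqrt (lam α))^2 + (1/32 : ℝ)*(Real.sqrt 2)^4*((Real.sqrt (2+Real.sqrt 2))⁻¹)^2 + (1/32 : ℝ)*(Real.sqrt 2)^4*((Real.sqrt (2+Real.sqrt 2))⁻¹)^2*(Real.sqrt (1 - lam α))^2 + (1/32 : ℝ)*(Real.sqrt 2)^4*((Real.sqrt (2+Real.sqrt 2))⁻¹)^2*(Real.sqrt (lam α))^2 + ((-1)/64 : ℝ)*(Real.sqrt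 2)^5 + (1/32 : ℝ)*(Real.sqrt 2)^5*((Real.sqrt (2+Real.sqrt 2))⁻¹)^2 + (1/32 : ℝ)*(Real.sqrt 2)^5*((Real.sqrt (2+Real.sqrt 2))⁻¹)^2*(Real.sqrt (1 - lam α))^2 + (1/32 : ℝ)*(Real.sqrt 2)^5*((Real.sqrt (2+Real.sqrt 2))⁻¹)^2*(Real.sqrt (lam α))^2 + (1/64 : ℝ)*(Real.sqrt 2)^6*((Real.sqrt (2+Real.sqrt 2))⁻¹)^2 + (1/64 : ℝ)*(Real.sqrt 2)^6*((Real.sqrt (2+Real.sqrt 2))⁻¹)^2*(Real.sqrt (1 - lam α))^2 + (1/64 : ℝ)*(Real.sqrt 2)^6*((Real.sqrt (2+Real.sqrt 2))⁻¹)^2*(Real.sqrt (lam α))^2 + ((-1)/8 : ℝ)*(α)*((Real.sqrt 2)⁻¹) + ((-1)/16 : ℝ)*(α)*(Real.sqrt 2)*((Real.sqrt (2+Real.sqrt 2))⁻¹)^2 + ((-1)/8 : ℝ)*(α)*(Real.sqrt 2)*((Real.sqrt (2+Real.sqrt 2))⁻¹)^2*((Real.sqrt ((1-α)^2+4*α^2))⁻¹)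 + ((-1)/16 : ℝ)*(α)*(Real.sqrt 2)*((Real.sqrt (2+Real.sqrt 2))⁻¹)^2*(Real.sqrt (1 - lam α))^2 + ((-1)/8 : ℝ)*(α)*(Real.sqrt 2)*((Real.sqrt (2+Real.sqrt 2))⁻¹)^2*(Real.sqrt (lam α))*(Real.sqrt (1 - lam α)) + ((-1)/16 : ℝ)*(α)*(Real.sqrt 2)*((Real.sqrt (2+Real.sqrt 2))⁻¹)^2*(Real.sqrt (lam α))^2 + ((-1)/32 : ℝ)*(α)*(Real.sqrt 2)^2 + (1/16 : ℝ)*(α)*(Real.sqrt 2)^2*((Real.sqrt ((1-α)^2+4*α^2))⁻¹) + ((-1)/8 : ℝ)*(α)*(Real.sqrt 2)^2*((Real.sqrt (2+Real.sqrt 2))⁻¹)^2*((Real.sqrt ((1-α)^2+4*α^2))⁻¹) + ((-1)/8 : ℝ)*(α)*(Real.sqrt 2)^2*((Real.sqrt (2+Real.sqrt 2))⁻¹)^2*(Real.sqrt (lam α))*(Real.sqrt (1 - lam α)) + ((-1)/32 : ℝ)*(α)*(Real.sqrt 2)^3 + (1/32 : ℝ)*(α)*(Real.sqrt 2)^3*((Real.sqrt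 (2+Real.sqrt 2))⁻¹)^2 + ((-1)/16 : ℝ)*(α)*(Real.sqrt 2)^3*((Real.sqrt (2+Real.sqrt 2))⁻¹)^2*((Real.sqrt ((1-α)^2+4*α^2))⁻¹) + ((-1)/32 : ℝ)*(α)*(Real.sqrt 2)^3*((Real.sqrt (2+Real.sqrt 2))⁻¹)^2*(Real.sqrt (1 - lam α))^2 + ((-1)/16 : ℝ)*(α)*(Real.sqrt 2)^3*((Real.sqrt (2+Real.sqrt 2))⁻¹)^2*(Real.sqrt (lam α))*(Real.sqrt (1 - lam α)) + (3/32 : ℝ)*(α)*(Real.sqrt 2)^3*((Real.sqrt (2+Real.sqrt 2))⁻¹)^2*(Real.sqrt (lam α))^2 + ((-1)/32 : ℝ)*(α)*(Real.sqrt 2)^4*((Real.sqrt (2+Real.sqrt 2))⁻¹)^2*(Real.sqrt (1 - lam α))^2 + (1/32 : ℝ)*(α)*(Real.sqrt 2)^4*((Real.sqrt (2+Real.sqrt 2))⁻¹)^2*(Real.sqrt (lam α))^2 + (1/64 : ℝ)*(α)*(Real.sqrt 2)^5 + ((-1)/32 : ℝ)*(α)*(Real.sqrt 2)^5*((Real.sqrt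 (2+Real.sqrt 2))⁻¹)^2 + ((-1)/32 : ℝ)*(α)*(Real.sqrt 2)^5*((Real.sqrt (2+Real.sqrt 2))⁻¹)^2*(Real.sqrt (1 - lam α))^2 + ((-1)/32 : ℝ)*(α)*(Real.sqrt 2)^5*((Real.sqrt (2+Real.sqrt 2))⁻¹)^2*(Real.sqrt (lam α))^2 + ((-1)/64 : ℝ)*(α)*(Real.sqrt 2)^6*((Real.sqrt (2+Real.sqrt 2))⁻¹)^2 + ((-1)/64 : ℝ)*(α)*(Real.sqrt 2)^6*((Real.sqrt (2+Real.sqrt 2))⁻¹)^2*(Real.sqrt (1 - lam α))^2 + ((-1)/64 : ℝ)*(α)*(Real.sqrt 2)^6*((Real.sqrt (2+Real.sqrt 2))⁻¹)^2*(Real.sqrt (lam α))^2 + ((-1)/4 : ℝ)*(α)^2*((Real.sqrt ((1-α)^2+4*α^2))⁻¹) + (1/4 : ℝ)*(α)^2*((Real.sqrt (2+Real.sqrt 2))⁻¹)^2*((Real.sqrt ((1-α)^2+4*α^2))⁻¹) + (1/8 : ℝ)*(α)^2*(Real.sqrt 2)*((Real.sqrt ((1-α)^2+4*α^2))⁻¹)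 + (5/16 : ℝ)*(α)^2*(Real.sqrt 2)*((Real.sqrt (2+Real.sqrt 2))⁻¹)^2*((Real.sqrt ((1-α)^2+4*α^2))⁻¹) + ((-1)/32 : ℝ)*(α)^2*(Real.sqrt 2)^2*((Real.sqrt ((1-α)^2+4*α^2))⁻¹) + (1/16 : ℝ)*(α)^2*(Real.sqrt 2)^2*((Real.sqrt (2+Real.sqrt 2))⁻¹)^2*((Real.sqrt ((1-α)^2+4*α^2))⁻¹) + ((-1)/16 : ℝ)*(α)^2*(Real.sqrt 2)^3*((Real.sqrt ((1-α)^2+4*α^2))⁻¹) + (5/32 : ℝ)*(α)^2*(Real.sqrt 2)^3*((Real.sqrt (2+Real.sqrt 2))⁻¹)^2*((Real.sqrt ((1-α)^2+4*α^2))⁻¹) + (1/16 : ℝ)*(α)^2*(Real.sqrt 2)^4*((Real.sqrt (2+Real.sqrt 2))⁻¹)^2*((Real.sqrt ((1-α)^2+4*α^2))⁻¹)) * h1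
    + (((-1)/2 : ℝ)*((Real.sqrt (2+Real.sqrt 2))⁻¹)^2 + ((-1)/8 : ℝ)*(Real.sqrt 2)*((Real.sqrt (2+Real.sqrt 2))⁻¹)^2 + ((-1)/8 : ℝ)*(Real.sqrt 2)*((Real.sqrt (2+Real.sqrt 2))⁻¹)^2*((Real.sqrt ((1-α)^2+4*α^2))⁻¹) + (1/16 : ℝ)*(Real.sqrt 2)^2*((Real.sqrt (2+Real.sqrt 2))⁻¹)^2 + ((-1)/16 : ℝ)*(Real.sqrt 2)^2*((Real.sqrt (2+Real.sqrt 2))⁻¹)^2*((Real.sqrt ((1-α)^2+4*α^2))⁻¹) + ((-1)/32 : ℝ)*(Real.sqrt 2)^4*((Real.sqrt (2+Real.sqrt 2))⁻¹)^2 + (1/32 : ℝ)*(Real.sqrt 2)^4*((Real.sqrt (2+Real.sqrt 2))⁻¹)^2*((Real.sqrt ((1-α)^2+4*α^2))⁻¹) + ((-1)/32 : ℝ)*(Real.sqrt 2)^5*((Real.sqrt (2+Real.sqrt 2))⁻¹)^2 + (1/64 : ℝ)*(Real.sqrt 2)^7*((Real.sqrt (2+Real.sqrt 2))⁻¹)^2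 + (1/8 : ℝ)*(α)*(Real.sqrt 2)*((Real.sqrt (2+Real.sqrt 2))⁻¹)^2 + (1/4 : ℝ)*(α)*(Real.sqrt 2)*((Real.sqrt (2+Real.sqrt 2))⁻¹)^2*((Real.sqrt ((1-α)^2+4*α^2))⁻¹) + ((-1)/16 : ℝ)*(α)*(Real.sqrt 2)^2*((Real.sqrt (2+Real.sqrt 2))⁻¹)^2 + (1/8 : ℝ)*(α)*(Real.sqrt 2)^2*((Real.sqrt (2+Real.sqrt 2))⁻¹)^2*((Real.sqrt ((1-α)^2+4*α^2))⁻¹) + ((-1)/16 : ℝ)*(α)*(Real.sqrt 2)^3*((Real.sqrt (2+Real.sqrt 2))⁻¹)^2 + (1/32 : ℝ)*(α)*(Real.sqrt 2)^4*((Real.sqrt (2+Real.sqrt 2))⁻¹)^2 + ((-1)/16 : ℝ)*(α)*(Real.sqrt 2)^4*((Real.sqrt (2+Real.sqrt 2))⁻¹)^2*((Real.sqrt ((1-α)^2+4*α^2))⁻¹) + (1/16 : ℝ)*(α)*(Real.sqrt 2)^5*((Real.sqrt (2+Real.sqrt 2))⁻¹)^2 + ((-1)/64 : ℝ)*(α)*(Real.sqrt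 2)^7*((Real.sqrt (2+Real.sqrt 2))⁻¹)^2 + ((-1)/2 : ℝ)*(α)^2*((Real.sqrt (2+Real.sqrt 2))⁻¹)^2*((Real.sqrt ((1-α)^2+4*α^2))⁻¹) + ((-3)/8 : ℝ)*(α)^2*(Real.sqrt 2)*((Real.sqrt (2+Real.sqrt 2))⁻¹)^2*((Real.sqrt ((1-α)^2+4*α^2))⁻¹) + (3/16 : ℝ)*(α)^2*(Real.sqrt 2)^2*((Real.sqrt (2+Real.sqrt 2))⁻¹)^2*((Real.sqrt ((1-α)^2+4*α^2))⁻¹) + ((-1)/4 : ℝ)*(α)^2*(Real.sqrt 2)^3*((Real.sqrt (2+Real.sqrt 2))⁻¹)^2*((Real.sqrt ((1-α)^2+4*α^2))⁻¹) + (1/32 : ℝ)*(α)^2*(Real.sqrt 2)^4*((Real.sqrt (2+Real.sqrt 2))⁻¹)^2*((Real.sqrt ((1-α)^2+4*α^2))⁻¹) + (1/16 : ℝ)*(α)^2*(Real.sqrt 2)^5*((Real.sqrt (2+Real.sqrt 2))⁻¹)^2*((Real.sqrt ((1-α)^2+4*α^2))⁻¹)) * h2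
    + ((1/2 : ℝ)*((Real.sqrt (2+Real.sqrt 2))⁻¹)^2 + (3/8 : ℝ)*(Real.sqrt 2)*((Real.sqrt (2+Real.sqrt 2))⁻¹)^2 + (1/8 : ℝ)*(Real.sqrt 2)^2*((Real.sqrt (2+Real.sqrt 2))⁻¹)^2 + (1/16 : ℝ)*(Real.sqrt 2)^3*((Real.sqrt (2+Real.sqrt 2))⁻¹)^2 + (1/16 : ℝ)*(Real.sqrt 2)^4*((Real.sqrt (2+Real.sqrt 2))⁻¹)^2 + (1/16 : ℝ)*(Real.sqrt 2)^5*((Real.sqrt (2+Real.sqrt 2))⁻¹)^2 + (1/32 : ℝ)*(Real.sqrt 2)^6*((Real.sqrt (2+Real.sqrt 2))⁻¹)^2 + (1/4 : ℝ)*(α)*((Real.sqrt (2+Real.sqrt 2))⁻¹)^2 + (1/8 : ℝ)*(α)*(Real.sqrt 2)*((Real.sqrt (2+Real.sqrt 2))⁻¹)^2 + (3/16 : ℝ)*(α)*(Real.sqrt 2)^3*((Real.sqrt (2+Real.sqrt 2))⁻¹)^2 + (1/16 : ℝ)*(α)*(Real.sqrt 2)^4*((Real.sqrt (2+Real.sqrt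 2))⁻¹)^2 + ((-1)/16 : ℝ)*(α)*(Real.sqrt 2)^5*((Real.sqrt (2+Real.sqrt 2))⁻¹)^2 + ((-1)/32 : ℝ)*(α)*(Real.sqrt 2)^6*((Real.sqrt (2+Real.sqrt 2))⁻¹)^2) * h3
    + ((1/2 : ℝ)*((Real.sqrt (2+Real.sqrt 2))⁻¹)^2 + (3/8 : ℝ)*(Real.sqrt 2)*((Real.sqrt (2+Real.sqrt 2))⁻¹)^2 + (1/8 : ℝ)*(Real.sqrt 2)^2*((Real.sqrt (2+Real.sqrt 2))⁻¹)^2 + (1/16 : ℝ)*(Real.sqrt 2)^3*((Real.sqrt (2+Real.sqrt 2))⁻¹)^2 + (1/16 : ℝ)*(Real.sqrt 2)^4*((Real.sqrt (2+Real.sqrt 2))⁻¹)^2 + (1/16 : ℝ)*(Real.sqrt 2)^5*((Real.sqrt (2+Real.sqrt 2))⁻¹)^2 + (1/32 : ℝ)*(Real.sqrt 2)^6*((Real.sqrt (2+Real.sqrt 2))⁻¹)^2 + ((-1)/4 : ℝ)*(α)*((Real.sqrt (2+Real.sqrt 2))⁻¹)^2 + ((-3)/8 : ℝ)*(α)*(Real.sqrt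 2)*((Real.sqrt (2+Real.sqrt 2))⁻¹)^2 + ((-1)/16 : ℝ)*(α)*(Real.sqrt 2)^3*((Real.sqrt (2+Real.sqrt 2))⁻¹)^2 + ((-1)/16 : ℝ)*(α)*(Real.sqrt 2)^4*((Real.sqrt (2+Real.sqrt 2))⁻¹)^2 + ((-1)/16 : ℝ)*(α)*(Real.sqrt 2)^5*((Real.sqrt (2+Real.sqrt 2))⁻¹)^2 + ((-1)/32 : ℝ)*(α)*(Real.sqrt 2)^6*((Real.sqrt (2+Real.sqrt 2))⁻¹)^2) * h4
    + ((1/4 : ℝ)*(Real.sqrt 2)*((Real.sqrt (2+Real.sqrt 2))⁻¹)^2 + (1/4 : ℝ)*(Real.sqrt 2)^2*((Real.sqrt (2+Real.sqrt 2))⁻¹)^2 + (1/8 : ℝ)*(Real.sqrt 2)^3*((Real.sqrt (2+Real.sqrt 2))⁻¹)^2 + ((-1)/4 : ℝ)*(α)*(Real.sqrt 2)*((Real.sqrt (2+Real.sqrt 2))⁻¹)^2 + ((-1)/4 : ℝ)*(α)*(Real.sqrt 2)^2*((Real.sqrt (2+Real.sqrt 2))⁻¹)^2 + ((-1)/8 :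 ℝ)*(α)*(Real.sqrt 2)^3*((Real.sqrt (2+Real.sqrt 2))⁻¹)^2) * h5
    + (((-1)/8 : ℝ)*(Real.sqrt 2)*((Real.sqrt ((1-α)^2+4*α^2))⁻¹)) * h6
    + (((-1)/8 : ℝ)*(Real.sqrt 2) + ((-1)/8 : ℝ)*(Real.sqrt 2)*(Real.sqrt ((1-α)^2+4*α^2)) + (1/8 : ℝ)*(α)*(Real.sqrt 2)) * h7
    + ((1/2 : ℝ) + (1/2 : ℝ)*(Real.sqrt (2+Real.sqrt 2))*((Real.sqrt (2+Real.sqrt 2))⁻¹) + (1/8 : ℝ)*(Real.sqrt 2) + (1/8 : ℝ)*(Real.sqrt 2)*((Real.sqrt ((1-α)^2+4*α^2))⁻¹) + (1/8 : ℝ)*(Real.sqrt 2)*(Real.sqrt (2+Real.sqrt 2))*((Real.sqrt (2+Real.sqrt 2))⁻¹) + (1/8 : ℝ)*(Real.sqrt 2)*(Real.sqrt (2+Real.sqrt 2))*((Real.sqrt (2+Real.sqrt 2))⁻¹)*((Real.sqrt ((1-α)^2+4*α^2))⁻¹) + ((-1)/16 : ℝ)*(Real.sqrt 2)^2 + (1/16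 : ℝ)*(Real.sqrt 2)^2*((Real.sqrt ((1-α)^2+4*α^2))⁻¹) + ((-1)/16 : ℝ)*(Real.sqrt 2)^2*(Real.sqrt (2+Real.sqrt 2))*((Real.sqrt (2+Real.sqrt 2))⁻¹) + (1/16 : ℝ)*(Real.sqrt 2)^2*(Real.sqrt (2+Real.sqrt 2))*((Real.sqrt (2+Real.sqrt 2))⁻¹)*((Real.sqrt ((1-α)^2+4*α^2))⁻¹) + (1/32 : ℝ)*(Real.sqrt 2)^4 + ((-1)/32 : ℝ)*(Real.sqrt 2)^4*((Real.sqrt ((1-α)^2+4*α^2))⁻¹) + (1/32 : ℝ)*(Real.sqrt 2)^4*(Real.sqrt (2+Real.sqrt 2))*((Real.sqrt (2+Real.sqrt 2))⁻¹) + ((-1)/32 : ℝ)*(Real.sqrt 2)^4*(Real.sqrt (2+Real.sqrt 2))*((Real.sqrt (2+Real.sqrt 2))⁻¹)*((Real.sqrt ((1-α)^2+4*α^2))⁻¹) + (1/32 : ℝ)*(Real.sqrt 2)^5 + (1/32 : ℝ)*(Real.sqrt 2)^5*(Real.sqrt (2+Real.sqrt 2))*((Real.sqrt (2+Real.sqrt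 2))⁻¹) + ((-1)/64 : ℝ)*(Real.sqrt 2)^7 + ((-1)/64 : ℝ)*(Real.sqrt 2)^7*(Real.sqrt (2+Real.sqrt 2))*((Real.sqrt (2+Real.sqrt 2))⁻¹) + ((-1)/8 : ℝ)*(α)*(Real.sqrt 2) + ((-1)/4 : ℝ)*(α)*(Real.sqrt 2)*((Real.sqrt ((1-α)^2+4*α^2))⁻¹) + ((-1)/8 : ℝ)*(α)*(Real.sqrt 2)*(Real.sqrt (2+Real.sqrt 2))*((Real.sqrt (2+Real.sqrt 2))⁻¹) + ((-1)/4 : ℝ)*(α)*(Real.sqrt 2)*(Real.sqrt (2+Real.sqrt 2))*((Real.sqrt (2+Real.sqrt 2))⁻¹)*((Real.sqrt ((1-α)^2+4*α^2))⁻¹) + (1/16 : ℝ)*(α)*(Real.sqrt 2)^2 + ((-1)/8 : ℝ)*(α)*(Real.sqrt 2)^2*((Real.sqrt ((1-α)^2+4*α^2))⁻¹) + (1/16 : ℝ)*(α)*(Real.sqrt 2)^2*(Real.sqrt (2+Real.sqrt 2))*((Real.sqrt (2+Real.sqrt 2))⁻¹) + ((-1)/8 : ℝ)*(α)*(Real.sqrt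 2)^2*(Real.sqrt (2+Real.sqrt 2))*((Real.sqrt (2+Real.sqrt 2))⁻¹)*((Real.sqrt ((1-α)^2+4*α^2))⁻¹) + (1/16 : ℝ)*(α)*(Real.sqrt 2)^3 + (1/16 : ℝ)*(α)*(Real.sqrt 2)^3*(Real.sqrt (2+Real.sqrt 2))*((Real.sqrt (2+Real.sqrt 2))⁻¹) + ((-1)/32 : ℝ)*(α)*(Real.sqrt 2)^4 + (1/16 : ℝ)*(α)*(Real.sqrt 2)^4*((Real.sqrt ((1-α)^2+4*α^2))⁻¹) + ((-1)/32 : ℝ)*(α)*(Real.sqrt 2)^4*(Real.sqrt (2+Real.sqrt 2))*((Real.sqrt (2+Real.sqrt 2))⁻¹) + (1/16 : ℝ)*(α)*(Real.sqrt 2)^4*(Real.sqrt (2+Real.sqrt 2))*((Real.sqrt (2+Real.sqrt 2))⁻¹)*((Real.sqrt ((1-α)^2+4*α^2))⁻¹) + ((-1)/16 : ℝ)*(α)*(Real.sqrt 2)^5 + ((-1)/16 : ℝ)*(α)*(Real.sqrt 2)^5*(Real.sqrt (2+Real.sqrt 2))*((Real.sqrt (2+Real.sqrt 2))⁻¹)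 + (1/64 : ℝ)*(α)*(Real.sqrt 2)^7 + (1/64 : ℝ)*(α)*(Real.sqrt 2)^7*(Real.sqrt (2+Real.sqrt 2))*((Real.sqrt (2+Real.sqrt 2))⁻¹) + (1/2 : ℝ)*(α)^2*((Real.sqrt ((1-α)^2+4*α^2))⁻¹) + (1/2 : ℝ)*(α)^2*(Real.sqrt (2+Real.sqrt 2))*((Real.sqrt (2+Real.sqrt 2))⁻¹)*((Real.sqrt ((1-α)^2+4*α^2))⁻¹) + (3/8 : ℝ)*(α)^2*(Real.sqrt 2)*((Real.sqrt ((1-α)^2+4*α^2))⁻¹) + (3/8 : ℝ)*(α)^2*(Real.sqrt 2)*(Real.sqrt (2+Real.sqrt 2))*((Real.sqrt (2+Real.sqrt 2))⁻¹)*((Real.sqrt ((1-α)^2+4*α^2))⁻¹) + ((-3)/16 : ℝ)*(α)^2*(Real.sqrt 2)^2*((Real.sqrt ((1-α)^2+4*α^2))⁻¹) + ((-3)/16 : ℝ)*(α)^2*(Real.sqrt 2)^2*(Real.sqrt (2+Real.sqrt 2))*((Real.sqrt (2+Real.sqrt 2))⁻¹)*((Real.sqrt ((1-α)^2+4*α^2))⁻¹)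 + (1/4 : ℝ)*(α)^2*(Real.sqrt 2)^3*((Real.sqrt ((1-α)^2+4*α^2))⁻¹) + (1/4 : ℝ)*(α)^2*(Real.sqrt 2)^3*(Real.sqrt (2+Real.sqrt 2))*((Real.sqrt (2+Real.sqrt 2))⁻¹)*((Real.sqrt ((1-α)^2+4*α^2))⁻¹) + ((-1)/32 : ℝ)*(α)^2*(Real.sqrt 2)^4*((Real.sqrt ((1-α)^2+4*α^2))⁻¹) + ((-1)/32 : ℝ)*(α)^2*(Real.sqrt 2)^4*(Real.sqrt (2+Real.sqrt 2))*((Real.sqrt (2+Real.sqrt 2))⁻¹)*((Real.sqrt ((1-α)^2+4*α^2))⁻¹) + ((-1)/16 : ℝ)*(α)^2*(Real.sqrt 2)^5*((Real.sqrt ((1-α)^2+4*α^2))⁻¹) + ((-1)/16 : ℝ)*(α)^2*(Real.sqrt 2)^5*(Real.sqrt (2+Real.sqrt 2))*((Real.sqrt (2+Real.sqrt 2))⁻¹)*((Real.sqrt ((1-α)^2+4*α^2))⁻¹)) * h8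
    + ((1/8 : ℝ)*(Real.sqrt 2)*(Real.sqrt ((1-α)^2+4*α^2))) * h9
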